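/- The total number of order-decreasing partial isometries of the chain {1,...,2n+1} equals 2^{2n+2} + 5·2^{n+1} − (2n² + 9n + 12), and the total number of order-decreasing partial isometries of {1,...,2n} equals 2^{2n+1} + 7·2^n − (2n² + 7n + 8). -/

import Mathlib

/-- Partial maps on ℕ; `none` means undefined. -/
def PDom (α : ℕ → Option ℕ) : Set ℕ := {x | α x ≠ none}
def PImg (α : ℕ → Option ℕ) : Set ℕ := {y | ∃ x, α x = some y}
def PFix (α : ℕ → Option ℕ) : Set ℕ := {x | α x = some x}

/-- `α` is a partial injective isometry of the chain {1,…,n}. -/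
def PIso (n : ℕ) (α : ℕ → Option ℕ) : Prop :=
  (∀ x, α x ≠ none → x ∈ Set.Icc 1 n) ∧
  (∀ x y, α x = some y → y ∈ Set.Icc 1 n) ∧
  (∀ x y a, α x = some a → α y = some a → x = y) ∧
  (∀ x y a b, α x = some a → α y = some b →
    ((a : ℤ) - (b : ℤ)).natAbs = ((x : ℤ) - (y : ℤ)).natAbs)

/-- order-decreasing -/
def PDecr (α : ℕ → Option ℕ) : Prop := ∀ x a, α x = some a → a ≤ x

/-- order-preserving -/
def POPres (α : ℕ → Option ℕ) : Prop :=
  ∀ x y a b, α x = some a → α y = some b → x ≤ y → a ≤ b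

/-- order-reversing -/
def PORev (α : ℕ → Option ℕ) : Prop :=
  ∀ x y a b, α x = some a → α y = some b → x ≤ y → b ≤ a

open Finset

/-- encoding: (D, v, false) is translation x ↦ x - v on D; (D, v, true) is reflection x ↦ v - x. -/
def enc (p : Finset ℕ × ℕ × Bool) : ℕ → Option ℕ :=
  fun x => if x ∈ p.1 then some (if p.2.2 then p.2.1 - x else x - p.2.1) else none

lemma enc_eval (D : Finset ℕ) (v : ℕ) (b : Bool) (x : ℕ) :
    enc (D, v, b) x = if x ∈ D then some (if b then v - x else x - v) else none := rfl

def good (m : ℕ) (p : Finset ℕ × ℕ × Bool) : Prop :=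
  (p.2.2 = false → (∀ x ∈ p.1, p.2.1 < x) ∧ (p.1 = ∅ → p.2.1 = 0)) ∧
  (p.2.2 = true → 2 ≤ p.1.card ∧ ∀ x ∈ p.1, x < p.2.1 ∧ p.2.1 ≤ 2 * x)

instance (m : ℕ) : DecidablePred (good m) := fun p => by unfold good; infer_instance

lemma good_false (m : ℕ) (D : Finset ℕ) (v : ℕ) :
    good m (D, v, false) ↔ (∀ x ∈ D, v < x) ∧ (D = ∅ → v = 0) := by
  simp [good]

lemma good_true (m : ℕ) (D : Finset ℕ) (v : ℕ) :
    good m (D, v, true) ↔ 2 ≤ D.card ∧ ∀ x ∈ D, x < v ∧ v ≤ 2 * x := by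
  simp [good]

def Jf (m : ℕ) : Finset (Finset ℕ × ℕ × Bool) :=
  (((Icc 1 m).powerset ×ˢ (range (2*m+1) ×ˢ (Finset.univ : Finset Bool)))).filter (good m)

lemma mem_Jf (m : ℕ) (D : Finset ℕ) (v : ℕ) (b : Bool) :
    (D, v, b) ∈ Jf m ↔ D ⊆ Icc 1 m ∧ v < 2*m+1 ∧ good m (D, v, b) := by
  simp [Jf, Finset.mem_filter, Finset.mem_product, and_assoc]

lemma enc_ne_none_iff (p : Finset ℕ × ℕ × Bool) (x : ℕ) : enc p x ≠ none ↔ x ∈ p.1 := by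
  unfold enc; split <;> simp_all

lemma key_iff (m : ℕ) (α : ℕ → Option ℕ) :
    (PIso m α ∧ PDecr α) ↔ ∃ p ∈ Jf m, enc p = α := by
  constructor
  · rintro ⟨⟨h1, h2, h3, h4⟩, h5⟩
    classical
    set D := (Icc 1 m).filter (fun x => α x ≠ none) with hDdef
    have hmemD : ∀ x, x ∈ D ↔ α x ≠ none := by
      intro x
      simp only [hDdef, Finset.mem_filter, mem_Icc, and_iff_right_iff_imp]
      intro hx
      simpa [Set.mem_Icc] using h1 x hx
    have hsome : ∀ x ∈ D, ∃ z, α x = some z := by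
      intro x hx
      have := (hmemD x).1 hx
      cases hax : α x with
      | none => exact absurd hax this
      | some z => exact ⟨z, rfl⟩
    have hDsub : D ⊆ Icc 1 m := filter_subset _ _
    by_cases hD : D = ∅
    · refine ⟨(∅, 0, false), ?_, ?_⟩
      · rw [mem_Jf, good_false]
        exact ⟨by simp, by omega, by simp, by simp⟩
      · funext x
        have hx : α x = none := by
          by_contra hx
          have : x ∈ D := (hmemD x).2 hx
          simp [hD] at this
        simp [enc_eval, hx]
    · have hne : D.Nonempty := nonempty_iff_ne_empty.mpr hD
      set p := D.min' hne with hpdef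
      have hpD : p ∈ D := D.min'_mem hne
      have hmin : ∀ x ∈ D, p ≤ x := fun x hx => D.min'_le x hx
      obtain ⟨a, ha⟩ := hsome p hpD
      have hap : a ≤ p := h5 p a ha
      have ha1 : 1 ≤ a ∧ a ≤ m := by simpa [Set.mem_Icc] using h2 p a ha
      have hp1 : 1 ≤ p ∧ p ≤ m := by simpa [mem_Icc] using hDsub hpD
      have hrel : ∀ x z, α x = some z → z + p = x + a ∨ z + x = a + p := by
        intro x z hz
        have hx : p ≤ x := hmin x ((hmemD x).2 (by simp [hz]))
        have := h4 x p z a hz ha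
        omega
      by_cases hcase : ∀ x z, α x = some z → z + p = x + a
      · refine ⟨(D, p - a, false), ?_, ?_⟩
        · rw [mem_Jf, good_false]
          refine ⟨hDsub, by omega, fun x hx => ?_, fun h => absurd h hD⟩
          have := hmin x hx
          omega
        · funext x
          by_cases hx : x ∈ D
          · obtain ⟨z, hz⟩ := hsome x hx
            have hzp := hcase x z hz
            have hxp : p ≤ x := hmin x hx
            rw [enc_eval, if_pos hx, hz, if_neg (by simp)]
            simp only [Option.some.injEq]
            omega
          · have : α x = none := by
              by_contra hax
              exact hx ((hmemD x).2 hax)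
            rw [enc_eval, if_neg hx, this]
      · push_neg at hcase
        obtain ⟨x0, z0, hz0, hne0⟩ := hcase
        have hx0D : x0 ∈ D := (hmemD x0).2 (by simp [hz0])
        have hx0p : x0 ≠ p := by
          rintro rfl
          rw [ha] at hz0
          have : z0 = a := by injection hz0.symm
          omega
        have hx0gt : p < x0 := lt_of_le_of_ne (hmin x0 hx0D) (Ne.symm hx0p)
        have hz01 : 1 ≤ z0 := by simpa [Set.mem_Icc] using (h2 x0 z0 hz0).1
        have hrefl0 : z0 + x0 = a + p := (hrel x0 z0 hz0).resolve_left hne0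
        have hrefl : ∀ x z, α x = some z → z + x = a + p := by
          intro x z hz
          rcases hrel x z hz with h | h
          · have h40 := h4 x x0 z z0 hz hz0
            have hx : p ≤ x := hmin x ((hmemD x).2 (by simp [hz]))
            omega
          · exact h
        refine ⟨(D, a + p, true), ?_, ?_⟩
        · rw [mem_Jf, good_true]
          refine ⟨hDsub, by omega, ?_, fun x hx => ?_⟩
          · exact Finset.one_lt_card.mpr ⟨x0, hx0D, p, hpD, hx0p⟩
          · obtain ⟨z, hz⟩ := hsome x hx
            have := hrefl x z hz
            have hz1 : 1 ≤ z := by simpa [Set.mem_Icc] using (h2 x z hz).1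
            have hzx : z ≤ x := h5 x z hz
            omega
        · funext x
          by_cases hx : x ∈ D
          · obtain ⟨z, hz⟩ := hsome x hx
            have := hrefl x z hz
            have hz1 : 1 ≤ z := by simpa [Set.mem_Icc] using (h2 x z hz).1
            rw [enc_eval, if_pos hx, hz, if_pos rfl]
            simp only [Option.some.injEq]
            omega
          · have : α x = none := by
              by_contra hax
              exact hx ((hmemD x).2 hax)
            rw [enc_eval, if_neg hx, this]
  · rintro ⟨⟨D, v, b⟩, hp, rfl⟩
    rw [mem_Jf] at hp
    obtain ⟨hsub, hv, hg⟩ := hp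
    have hbnd : ∀ x ∈ D, 1 ≤ x ∧ x ≤ m := by
      intro x hx; simpa [mem_Icc] using hsub hx
    have hval : ∀ x y, enc (D, v, b) x = some y →
        x ∈ D ∧ y = (if b then v - x else x - v) := by
      intro x y hxy
      rw [enc_eval] at hxy
      by_cases hx : x ∈ D
      · rw [if_pos hx] at hxy
        exact ⟨hx, (Option.some.injEq _ _ ▸ hxy.symm)⟩
      · rw [if_neg hx] at hxy; exact absurd hxy (by simp)
    cases b
    · rw [good_false] at hg
      obtain ⟨hlt, -⟩ := hg
      refine ⟨⟨?_, ?_, ?_, ?_⟩, ?_⟩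
      · intro x hx
        rw [enc_ne_none_iff] at hx
        simpa [Set.mem_Icc] using hbnd x hx
      · intro x y hxy
        obtain ⟨hx, hy⟩ := hval x y hxy
        simp only [if_neg (by simp : ¬(false = true))] at hy
        have := hbnd x hx; have := hlt x hx
        simp only [Set.mem_Icc]; omega
      · intro x y a hx hy
        obtain ⟨hx1, ha1⟩ := hval x a hx
        obtain ⟨hy1, hb1⟩ := hval y a hy
        simp only [if_neg (by simp : ¬(false = true))] at ha1 hb1
        have := hlt x hx1; have := hlt y hy1
        omega
      · intro x y a b hx hy
        obtain ⟨hx1, ha1⟩ := hval x a hx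
        obtain ⟨hy1, hb1⟩ := hval y b hy
        simp only [if_neg (by simp : ¬(false = true))] at ha1 hb1
        have := hlt x hx1; have := hlt y hy1
        omega
      · intro x a hx
        obtain ⟨hx1, ha1⟩ := hval x a hx
        simp only [if_neg (by simp : ¬(false = true))] at ha1
        omega
    · rw [good_true] at hg
      obtain ⟨-, hlt⟩ := hg
      refine ⟨⟨?_, ?_, ?_, ?_⟩, ?_⟩
      · intro x hx
        rw [enc_ne_none_iff] at hx
        simpa [Set.mem_Icc] using hbnd x hx
      · intro x y hxy
        obtain ⟨hx, hy⟩ := hval x y hxy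
        simp at hy
        have := hbnd x hx; have := hlt x hx
        simp only [Set.mem_Icc]; omega
      · intro x y a hx hy
        obtain ⟨hx1, ha1⟩ := hval x a hx
        obtain ⟨hy1, hb1⟩ := hval y a hy
        simp at ha1 hb1
        have := hlt x hx1; have := hlt y hy1
        omega
      · intro x y a b hx hy
        obtain ⟨hx1, ha1⟩ := hval x a hx
        obtain ⟨hy1, hb1⟩ := hval y b hy
        simp at ha1 hb1
        have := hlt x hx1; have := hlt y hy1
        omega
      · intro x a hx
        obtain ⟨hx1, ha1⟩ := hval x a hx
        simp at ha1
        have := hlt x hx1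
        omega

lemma enc_injOn (m : ℕ) : Set.InjOn enc ↑(Jf m) := by
  rintro ⟨D, v, b⟩ hp ⟨D', w, c⟩ hq heq
  simp only [Finset.mem_coe] at hp hq
  rw [mem_Jf] at hp hq
  obtain ⟨hsub, hv, hg⟩ := hp
  obtain ⟨hsub', hw, hg'⟩ := hq
  have hDD : D = D' := by
    ext x
    rw [← enc_ne_none_iff (D, v, b) x, ← enc_ne_none_iff (D', w, c) x, heq]
  subst hDD
  have hval : ∀ x ∈ D, (if b then v - x else x - v) = (if c then w - x else x - w) := by
    intro x hx
    have := congrFun heq x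
    rw [enc_eval, enc_eval, if_pos hx, if_pos hx] at this
    exact Option.some.injEq _ _ ▸ this
  have hbnd : ∀ x ∈ D, 1 ≤ x ∧ x ≤ m := by
    intro x hx; simpa [mem_Icc] using hsub hx
  cases b <;> cases c
  · rw [good_false] at hg hg'
    rcases eq_or_ne D ∅ with rfl | hDe
    · rw [hg.2 rfl, hg'.2 rfl]
    · obtain ⟨x, hx⟩ := nonempty_iff_ne_empty.mpr hDe
      have h1 := hval x hx
      simp only [if_neg (by simp : ¬(false = true))] at h1
      have := hg.1 x hx; have := hg'.1 x hx
      have : v = w := by omega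
      subst this; rfl
  · rw [good_false] at hg
    rw [good_true] at hg'
    obtain ⟨x, hx, y, hy, hxy⟩ := Finset.one_lt_card.mp hg'.1
    have h1 := hval x hx
    have h2 := hval y hy
    simp at h1 h2
    have := hg.1 x hx; have := hg.1 y hy
    have := (hg'.2 x hx); have := (hg'.2 y hy)
    exact absurd (by omega : x = y) hxy
  · rw [good_false] at hg'
    rw [good_true] at hg
    obtain ⟨x, hx, y, hy, hxy⟩ := Finset.one_lt_card.mp hg.1
    have h1 := hval x hx
    have h2 := hval y hy
    simp at h1 h2
    have := hg'.1 x hx; have := hg'.1 y hy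
    have := (hg.2 x hx); have := (hg.2 y hy)
    exact absurd (by omega : x = y) hxy
  · rw [good_true] at hg hg'
    have hne : D.Nonempty := Finset.card_pos.mp (by omega)
    obtain ⟨x, hx⟩ := hne
    have h1 := hval x hx
    simp at h1
    have := (hg.2 x hx); have := (hg'.2 x hx)
    have : v = w := by omega
    subst this; rfl

lemma card_eq_Jf (m : ℕ) :
    Nat.card {α : ℕ → Option ℕ // PIso m α ∧ PDecr α} = (Jf m).card := by
  have h : ∀ α : ℕ → Option ℕ, (PIso m α ∧ PDecr α) ↔ α ∈ enc '' ↑(Jf m) := by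
    intro α
    rw [key_iff]
    simp [Set.mem_image]
  rw [Nat.card_congr (Equiv.subtypeEquivRight h)]
  rw [Nat.card_coe_set_eq, Set.ncard_image_of_injOn (enc_injOn m), Set.ncard_coe_finset]

/-- number of subsets of an ℓ-element set with at least 2 elements -/
def pc (ℓ : ℕ) : ℕ := 2 ^ ℓ - ℓ - 1

lemma card_filter_two_le (s : Finset ℕ) :
    ((s.powerset).filter (fun D => 2 ≤ D.card)).card = pc s.card := by
  classical
  have key : ∀ k : ℕ, (s.powerset.filter (fun D => D.card = k)).card = s.card.choose k := by
    intro k; rw [← Finset.powersetCard_eq_filter, Finset.card_powersetCard]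
  have h01 : (s.powerset.filter (fun D => D.card < 2)).card = 1 + s.card := by
    have hu : s.powerset.filter (fun D => D.card < 2)
        = s.powerset.filter (fun D => D.card = 0) ∪ s.powerset.filter (fun D => D.card = 1) := by
      ext D
      simp only [Finset.mem_filter, Finset.mem_union]
      constructor
      · rintro ⟨hm, hc⟩
        rcases (by omega : D.card = 0 ∨ D.card = 1) with h | h
        · exact Or.inl ⟨hm, h⟩
        · exact Or.inr ⟨hm, h⟩
      · rintro (⟨hm, h⟩ | ⟨hm, h⟩) <;> exact ⟨hm, by omega⟩
    have hdisj : Disjoint (s.powerset.filter (fun D => D.card = 0))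
        (s.powerset.filter (fun D => D.card = 1)) := by
      rw [Finset.disjoint_left]
      intro D hD hD'
      simp only [Finset.mem_filter] at hD hD'
      omega
    rw [hu, Finset.card_union_of_disjoint hdisj, key 0, key 1, Nat.choose_zero_right,
      Nat.choose_one_right]
  have h2 : s.powerset.filter (fun D => 2 ≤ D.card)
      = s.powerset \ s.powerset.filter (fun D => D.card < 2) := by
    ext D
    simp only [Finset.mem_filter, Finset.mem_sdiff, not_and, not_lt]
    constructor
    · rintro ⟨hm, hc⟩; exact ⟨hm, fun _ => hc⟩
    · rintro ⟨hm, hc⟩; exact ⟨hm, hc hm⟩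
  rw [h2, Finset.card_sdiff_of_subset (Finset.filter_subset _ _), h01, Finset.card_powerset]
  have := @Nat.lt_two_pow_self s.card
  unfold pc; omega

lemma pair_eq {v w : ℕ} {b c : Bool} (h : (v, b) = (w, c)) : v = w ∧ b = c := by
  rw [Prod.mk.injEq] at h; exact h

lemma fibT0 (m : ℕ) :
    ((Jf m).filter (fun p => p.2 = (0, false))).card = 2 ^ m := by
  rw [show (2:ℕ) ^ m = (Icc 1 m).powerset.card by
    rw [Finset.card_powerset, Nat.card_Icc, Nat.add_sub_cancel]]
  refine Finset.card_bij' (fun p _ => p.1) (fun D _ => (D, 0, false)) ?_ ?_ ?_ ?_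
  · rintro ⟨D, v, b⟩ hp
    dsimp only
    simp only [Finset.mem_filter] at hp
    rw [Finset.mem_powerset]
    exact ((mem_Jf m D v b).1 hp.1).1
  · intro D hD
    rw [Finset.mem_powerset] at hD
    rw [Finset.mem_filter, mem_Jf, good_false]
    refine ⟨⟨hD, by omega, fun x hx => ?_, fun _ => rfl⟩, rfl⟩
    have := hD hx
    rw [mem_Icc] at this
    omega
  · rintro ⟨D, v, b⟩ hp
    simp only [Finset.mem_filter] at hp
    obtain ⟨h1, h2⟩ := pair_eq hp.2
    dsimp only
    rw [h1, h2]
  · intro D hD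
    rfl

lemma fibTpos (m v : ℕ) (hv : 1 ≤ v) :
    ((Jf m).filter (fun p => p.2 = (v, false))).card = 2 ^ (m - v) - 1 := by
  rw [show (2:ℕ) ^ (m - v) - 1 = ((Icc (v+1) m).powerset.erase ∅).card by
    rw [Finset.card_erase_of_mem (Finset.empty_mem_powerset _), Finset.card_powerset,
      Nat.card_Icc]
    congr 2
    omega]
  refine Finset.card_bij' (fun p _ => p.1) (fun D _ => (D, v, false)) ?_ ?_ ?_ ?_
  · rintro ⟨D, w, b⟩ hp
    dsimp only
    simp only [Finset.mem_filter] at hp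
    obtain ⟨rfl, rfl⟩ : w = v ∧ b = false := pair_eq hp.2
    have hp := hp.1
    rw [mem_Jf, good_false] at hp
    obtain ⟨hsub, -, hlt, hemp⟩ := hp
    rw [Finset.mem_erase, Finset.mem_powerset]
    constructor
    · intro h
      rw [h] at hemp
      have := hemp rfl
      omega
    · intro x hx
      have h1 := hsub hx
      rw [mem_Icc] at h1 ⊢
      have := hlt x hx
      omega
  · intro D hD
    rw [Finset.mem_erase, Finset.mem_powerset] at hD
    obtain ⟨hne, hsub⟩ := hD
    have hbd : ∀ x ∈ D, v + 1 ≤ x ∧ x ≤ m := by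
      intro x hx; have := hsub hx; rwa [mem_Icc] at this
    obtain ⟨x0, hx0⟩ := nonempty_iff_ne_empty.mpr hne
    have hx0b := hbd x0 hx0
    rw [Finset.mem_filter, mem_Jf, good_false]
    refine ⟨⟨fun x hx => ?_, by omega, fun x hx => by have := hbd x hx; omega,
      fun h => absurd h hne⟩, rfl⟩
    have := hbd x hx
    rw [mem_Icc]
    omega
  · rintro ⟨D, w, b⟩ hp
    simp only [Finset.mem_filter] at hp
    obtain ⟨h1, h2⟩ := pair_eq hp.2
    dsimp only
    rw [h1, h2]
  · intro D hD
    rfl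

lemma fibR (m c : ℕ) :
    ((Jf m).filter (fun p => p.2 = (c, true))).card = pc (min (c-1) m + 1 - (c+1)/2) := by
  rcases Nat.eq_zero_or_pos c with rfl | hc
  · have he : ((Jf m).filter (fun p : Finset ℕ × ℕ × Bool => p.2 = (0, true))) = ∅ := by
      rw [Finset.filter_eq_empty_iff]
      rintro ⟨D, w, b⟩ hp
      intro hvb
      obtain ⟨rfl, rfl⟩ : w = 0 ∧ b = true := pair_eq hvb
      rw [mem_Jf, good_true] at hp
      obtain ⟨-, -, hcard, hlt⟩ := hp
      have hpos : 0 < D.card := by omega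
      obtain ⟨x, hx⟩ := Finset.card_pos.mp hpos
      have := hlt x hx
      omega
    rw [he]
    simp [pc]
  · rw [show pc (min (c-1) m + 1 - (c+1)/2) =
      ((Icc ((c+1)/2) (min (c-1) m)).powerset.filter (fun D => 2 ≤ D.card)).card by
      rw [card_filter_two_le, Nat.card_Icc]]
    refine Finset.card_bij' (fun p _ => p.1) (fun D _ => (D, c, true)) ?_ ?_ ?_ ?_
    · rintro ⟨D, w, b⟩ hp
      dsimp only
      simp only [Finset.mem_filter] at hp
      obtain ⟨rfl, rfl⟩ : w = c ∧ b = true := pair_eq hp.2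
      have hp := hp.1
      rw [mem_Jf, good_true] at hp
      obtain ⟨hsub, -, hcard, hlt⟩ := hp
      rw [Finset.mem_filter, Finset.mem_powerset]
      refine ⟨fun x hx => ?_, hcard⟩
      have h1 := hsub hx
      rw [mem_Icc] at h1 ⊢
      have := hlt x hx
      omega
    · intro D hD
      rw [Finset.mem_filter, Finset.mem_powerset] at hD
      obtain ⟨hsub, hcard⟩ := hD
      have hbd : ∀ x ∈ D, (c+1)/2 ≤ x ∧ x ≤ min (c-1) m := by
        intro x hx; have := hsub hx; rwa [mem_Icc] at this
      have hpos : 0 < D.card := by omega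
      obtain ⟨x0, hx0⟩ := Finset.card_pos.mp hpos
      have hx0b := hbd x0 hx0
      rw [Finset.mem_filter, mem_Jf, good_true]
      refine ⟨⟨fun x hx => ?_, by omega, hcard, fun x hx => by have := hbd x hx; omega⟩, rfl⟩
      have := hbd x hx
      rw [mem_Icc]
      omega
    · rintro ⟨D, w, b⟩ hp
      simp only [Finset.mem_filter] at hp
      obtain ⟨h1, h2⟩ := pair_eq hp.2
      dsimp only
      rw [h1, h2]
    · intro D hD
      rfl

lemma Jf_card (m : ℕ) : (Jf m).card =
    (∑ v ∈ range (2*m+1), (if v = 0 then 2^m else 2^(m-v) - 1))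
    + ∑ c ∈ range (2*m+1), pc (min (c-1) m + 1 - (c+1)/2) := by
  classical
  rw [Finset.card_eq_sum_card_fiberwise (f := fun p => p.2)
    (t := range (2*m+1) ×ˢ (Finset.univ : Finset Bool))
    (fun p hp => by
      obtain ⟨D, v, b⟩ := p
      rw [Finset.mem_coe, mem_Jf] at hp
      rw [Finset.mem_coe, Finset.mem_product, Finset.mem_range]
      exact ⟨hp.2.1, Finset.mem_univ b⟩)]
  rw [Finset.sum_product]
  have hsum : ∀ v ∈ range (2*m+1),
      (∑ b : Bool, ((Jf m).filter (fun p => p.2 = (v, b))).card)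
      = (if v = 0 then 2^m else 2^(m-v) - 1) + pc (min (v-1) m + 1 - (v+1)/2) := by
    intro v hv
    rw [Fintype.sum_bool, fibR m v]
    rcases Nat.eq_zero_or_pos v with rfl | hvpos
    · rw [fibT0 m, if_pos rfl]
      exact Nat.add_comm _ _
    · rw [fibTpos m v hvpos, if_neg (by omega)]
      exact Nat.add_comm _ _
  rw [Finset.sum_congr rfl hsum, Finset.sum_add_distrib]

lemma geom (k : ℕ) : ∑ i ∈ range k, ((2:ℕ)^i - 1) + k + 1 = 2^k := by
  induction k with
  | zero => simp
  | succ n ih =>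
    rw [Finset.sum_range_succ, pow_succ]
    have h1 : n < 2^n := Nat.lt_two_pow_self
    omega

lemma Tsum_eq (m : ℕ) :
    (∑ v ∈ range (2*m+1), (if v = 0 then 2^m else 2^(m-v) - 1)) + (m + 1) = 2^(m+1) := by
  rw [Finset.sum_range_succ']
  have hterm : ∑ k ∈ range (2*m), (if k+1 = 0 then (2:ℕ)^m else 2^(m-(k+1)) - 1)
      = ∑ k ∈ range (2*m), ((2:ℕ)^(m-(k+1)) - 1) :=
    Finset.sum_congr rfl fun k _ => if_neg (Nat.succ_ne_zero k)
  have h0 : (if (0:ℕ) = 0 then (2:ℕ)^m else 2^(m-0) - 1) = 2^m := if_pos rfl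
  rw [hterm, h0]
  have hsub : ∑ i ∈ range (2*m), ((2:ℕ)^(m-(i+1)) - 1)
      = ∑ i ∈ range m, ((2:ℕ)^(m-(i+1)) - 1) := by
    symm
    apply Finset.sum_subset
    · intro x hx
      rw [Finset.mem_range] at hx ⊢
      omega
    · intro x _ hnx
      rw [Finset.mem_range] at hnx
      have hx0 : m - (x+1) = 0 := by omega
      rw [hx0]
      simp
  rw [hsub]
  have hrefl : ∑ i ∈ range m, ((2:ℕ)^(m-(i+1)) - 1) = ∑ i ∈ range m, ((2:ℕ)^i - 1) := by
    rw [← Finset.sum_range_reflect (fun i => (2:ℕ)^i - 1) m]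
    apply Finset.sum_congr rfl
    intro i hi
    rw [Finset.mem_range] at hi
    congr 2
    omega
  rw [hrefl]
  have := geom m
  rw [pow_succ]
  omega

def W (M : ℕ) : ℕ := ∑ j ∈ range M, (pc ((j+1)/2) + pc (j/2+1))

lemma Rsum_eq (m : ℕ) :
    ∑ c ∈ range (2*m+1), pc (min (c-1) m + 1 - (c+1)/2) = W m := by
  rw [show 2*m+1 = (m+1) + m by omega, Finset.sum_range_add]
  have hA : ∑ c ∈ range (m+1), pc (min (c-1) m + 1 - (c+1)/2)
      = ∑ c ∈ range (m+1), pc (c/2) := by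
    apply Finset.sum_congr rfl
    intro c hc
    rw [Finset.mem_range] at hc
    rcases Nat.eq_zero_or_pos c with rfl | hcpos
    · norm_num [pc]
    · rw [min_eq_left (by omega : c - 1 ≤ m)]
      congr 1
      omega
  have hA2 : ∑ c ∈ range (m+1), pc (c/2) = ∑ j ∈ range m, pc ((j+1)/2) := by
    rw [Finset.sum_range_succ']
    norm_num [pc]
  have hB : ∑ i ∈ range m, pc (min (m+1+i-1) m + 1 - (m+1+i+1)/2)
      = ∑ j ∈ range m, pc (j/2+1) := by
    rw [← Finset.sum_range_reflect (fun j => pc (j/2+1)) m]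
    apply Finset.sum_congr rfl
    intro i hi
    rw [Finset.mem_range] at hi
    rw [min_eq_right (by omega : m ≤ m+1+i-1)]
    congr 1
    omega
  rw [hA, hA2, hB, W, ← Finset.sum_add_distrib]

lemma W_even (n : ℕ) : W (2*n) + (2*n^2 + 5*n + 7) = 7 * 2^n := by
  induction n with
  | zero => simp [W]
  | succ n ih =>
    obtain ⟨s, hs⟩ : ∃ s, n^2 = s := ⟨_, rfl⟩
    have hs2 : (n+1)^2 = s + 2*n + 1 := by rw [← hs]; ring
    rw [show 2*(n+1) = (2*n+1)+1 by ring, W, Finset.sum_range_succ, Finset.sum_range_succ,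
      ← W]
    simp only [show (2*n+1)/2 = n by omega, show 2*n/2+1 = n+1 by omega,
      show (2*n+1+1)/2 = n+1 by omega, show (2*n+1)/2+1 = n+1 by omega]
    rw [hs2]
    rw [hs] at ih
    simp only [pc, pow_succ]
    have h1 : n < 2^n := Nat.lt_two_pow_self
    omega

lemma W_odd (n : ℕ) : W (2*n+1) + (2*n^2 + 7*n + 10) = 10 * 2^n := by
  have he := W_even n
  obtain ⟨s, hs⟩ : ∃ s, n^2 = s := ⟨_, rfl⟩
  rw [hs] at he ⊢
  rw [W, Finset.sum_range_succ, ← W]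
  simp only [show (2*n+1)/2 = n by omega, show 2*n/2+1 = n+1 by omega]
  simp only [pc, pow_succ]
  have h1 : n < 2^n := Nat.lt_two_pow_self
  omega


/-- Orders of the semigroups of order-decreasing partial isometries of odd and
even chains. -/
theorem ddp_order (n : ℕ) :
    Nat.card {α : ℕ → Option ℕ // PIso (2 * n + 1) α ∧ PDecr α} =
      2 ^ (2 * n + 2) + 5 * 2 ^ (n + 1) - (2 * n ^ 2 + 9 * n + 12) ∧
    Nat.card {α : ℕ → Option ℕ // PIso (2 * n) α ∧ PDecr α} =
      2 ^ (2 * n + 1) + 7 * 2 ^ n - (2 * n ^ 2 + 7 * n + 8) := by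
  obtain ⟨s, hs⟩ : ∃ s, n^2 = s := ⟨_, rfl⟩
  constructor
  · rw [card_eq_Jf, Jf_card, Rsum_eq]
    have hT := Tsum_eq (2*n+1)
    have hW := W_odd n
    rw [hs] at hW ⊢
    rw [show (2*n+1)+1 = 2*n+2 by ring] at hT
    have h5 : 5 * 2^(n+1) = 10 * 2^n := by rw [pow_succ]; ring
    rw [h5]
    omega
  · rw [card_eq_Jf, Jf_card, Rsum_eq]
    have hT := Tsum_eq (2*n)
    have hW := W_even n
    rw [hs] at hW ⊢
    omega
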